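/- Let 0 < α ≤ 2 and let L₁ ≥ L₂ > 0 be real numbers. Set D = √(L₁² + L₂²) and d = L₂. Then (4π²/L₁² + π²/L₂²)^{α/2} − (π²/L₁² + π²/L₂²)^{α/2} ≥ (4π²/D² + π²/d²)^{α/2} − (π²/D² + π²/d²)^{α/2}. -/
import Mathlib


open Real

/-- The gap `(4t+w)^β - (t+w)^β` is monotone in `t ≥ 0` for `β > 0`. -/
lemma gap_mono_aux {β u v w : ℝ} (hβ0 : 0 < β) (hw : 0 < w) (hu : 0 ≤ u)
    (huv : u ≤ v) :
    (4 * u + w) ^ β - (u + w) ^ β ≤ (4 * v + w) ^ β - (v + w) ^ β := by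
  have hx : 0 < u + w := by linarith
  have hy : 0 < v + w := by linarith
  have ha : 0 < 4 * u + w := by linarith
  have hb : 0 < 4 * v + w := by linarith
  have hratio : (4 * u + w) / (u + w) ≤ (4 * v + w) / (v + w) := by
    rw [div_le_div_iff₀ hx hy]
    nlinarith
  have hkey : ((4 * u + w) / (u + w)) ^ β ≤ ((4 * v + w) / (v + w)) ^ β :=
    Real.rpow_le_rpow (by positivity) hratio hβ0.le
  rw [Real.div_rpow ha.le hx.le, Real.div_rpow hb.le hy.le] at hkey
  have hX : (0:ℝ) < (u + w) ^ β := Real.rpow_pos_of_pos hx β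
  have hY : (0:ℝ) < (v + w) ^ β := Real.rpow_pos_of_pos hy β
  rw [div_le_div_iff₀ hX hY] at hkey
  have hXA : (u + w) ^ β ≤ (4 * u + w) ^ β :=
    Real.rpow_le_rpow hx.le (by linarith) hβ0.le
  have hXY : (u + w) ^ β ≤ (v + w) ^ β :=
    Real.rpow_le_rpow hx.le (by linarith) hβ0.le
  nlinarith [mul_nonneg (sub_nonneg.2 hXA) (sub_nonneg.2 hXY)]

theorem gap_box_2d_reduction (α L₁ L₂ : ℝ) (hα : 0 < α) (hα2 : α ≤ 2)
    (hL₂ : 0 < L₂) (hL : L₂ ≤ L₁)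
    (D d : ℝ) (hD : D = Real.sqrt (L₁ ^ 2 + L₂ ^ 2)) (hd : d = L₂) :
    (4 * π ^ 2 / L₁ ^ 2 + π ^ 2 / L₂ ^ 2) ^ (α / 2)
        - (π ^ 2 / L₁ ^ 2 + π ^ 2 / L₂ ^ 2) ^ (α / 2)
      ≥ (4 * π ^ 2 / D ^ 2 + π ^ 2 / d ^ 2) ^ (α / 2)
        - (π ^ 2 / D ^ 2 + π ^ 2 / d ^ 2) ^ (α / 2) := by
  have hL₁ : 0 < L₁ := lt_of_lt_of_le hL₂ hL
  have hD2 : D ^ 2 = L₁ ^ 2 + L₂ ^ 2 := by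
    rw [hD, Real.sq_sqrt (by positivity)]
  have hπ : 0 < π := Real.pi_pos
  have hβ0 : 0 < α / 2 := by positivity
  have hu0 : 0 < π ^ 2 / D ^ 2 := by rw [hD2]; positivity
  have hw0 : 0 < π ^ 2 / L₂ ^ 2 := by positivity
  have huv : π ^ 2 / D ^ 2 ≤ π ^ 2 / L₁ ^ 2 := by
    rw [hD2]
    apply div_le_div_of_nonneg_left (by positivity) (by positivity)
    nlinarith
  have key := gap_mono_aux (u := π ^ 2 / D ^ 2) (v := π ^ 2 / L₁ ^ 2)
    (w := π ^ 2 / L₂ ^ 2) hβ0 hw0 hu0.le huv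
  have h4u : 4 * (π ^ 2 / D ^ 2) = 4 * π ^ 2 / D ^ 2 := by ring
  have h4v : 4 * (π ^ 2 / L₁ ^ 2) = 4 * π ^ 2 / L₁ ^ 2 := by ring
  rw [h4u, h4v] at key
  rw [hd]
  exact key
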